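/- arXiv:2103.05485 — 2 statements merged into one kernel-verified Lean document; each statement's English description precedes it below -/
import Mathlib

section
/- Let A be a 2NFA and suppose a computation of A on a tape segment containing zσ starts at the rightmost position (holding σ) in state p, stays within the segment, and exits to the right in state q. Then (p,q) ∈ τ_{zσ} if and only if there exists a finite sequence of states r₀ = p, s₀, r₁, s₁, …, r_ℓ with ℓ ≥ 0 such that (q, right) ∈ δ(r_ℓ, σ), and for each i < ℓ, (s_i, left) ∈ δ(r_i, σ) and (s_i, r_{i+1}) ∈ τ_z. -/
/-- Head directions of a two-way automaton. -/
inductive WDir | L | R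

/-- One step of a 2NFA with transition function `δ` on the tape segment
containing the word `u`: configurations are pairs (state, position), positions
`0, …, u.length - 1` are inside the segment and position `u.length` means the
machine has just exited the segment to the right. -/
def segStep {Q Γ : Type*} (δ : Q → Γ → Set (Q × WDir)) (u : List Γ) :
    Q × ℕ → Q × ℕ → Prop :=
  fun c c' => ∃ a, u[c.2]? = some a ∧
    (((c'.1, WDir.L) ∈ δ c.1 a ∧ c'.2 + 1 = c.2) ∨
     ((c'.1, WDir.R) ∈ δ c.1 a ∧ c'.2 = c.2 + 1))

/-- Reachability between configurations by a computation staying within the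
segment containing `u` (possibly exiting to the right at the last step). -/
def segReach {Q Γ : Type*} (δ : Q → Γ → Set (Q × WDir)) (u : List Γ) :
    Q × ℕ → Q × ℕ → Prop :=
  Relation.ReflTransGen (segStep δ u)

/-- The Shepherdson table `τ_u`: pairs `(p, q)` such that from state `p` on the
rightmost cell of the segment containing `u` there is a computation staying
within the segment and exiting to the right in state `q`. -/
def tauT {Q Γ : Type*} (δ : Q → Γ → Set (Q × WDir)) (u : List Γ) :
    Set (Q × Q) :=
  {pq | segReach δ u (pq.1, u.length - 1) (pq.2, u.length)}

/-- The table `γ_u`: states `r` such that there is a computation from the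
initial state `q₀` at the leftmost cell of the segment containing `u`, staying
within the segment, and exiting to the right in state `r`. -/
def gammaT {Q Γ : Type*} (δ : Q → Γ → Set (Q × WDir)) (q₀ : Q) (u : List Γ) :
    Set Q :=
  {r | segReach δ u (q₀, 0) (r, u.length)}

section TauAux

variable {Q Γ : Type*} (δ : Q → Γ → Set (Q × WDir))

lemma segStep_lift (z : List Γ) (σ : Γ) {c c' : Q × ℕ}
    (h : segStep δ z c c') : segStep δ (z ++ [σ]) c c' := by
  obtain ⟨a, ha, h2⟩ := h
  have hlt : c.2 < z.length := by
    by_contra h'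
    rw [List.getElem?_eq_none (not_lt.mp h')] at ha
    cases ha
  exact ⟨a, by rw [List.getElem?_append_left hlt]; exact ha, h2⟩

lemma segReach_lift (z : List Γ) (σ : Γ) {c c' : Q × ℕ}
    (h : segReach δ z c c') : segReach δ (z ++ [σ]) c c' :=
  Relation.ReflTransGen.mono (fun _ _ hs => segStep_lift δ z σ hs) _ _ h

/-- The right-hand-side predicate of the recurrence, as a predicate on `p`. -/
def TabP (z : List Γ) (σ : Γ) (q p : Q) : Prop :=
  ∃ (ℓ : ℕ) (r s : ℕ → Q),
    r 0 = p ∧ (q, WDir.R) ∈ δ (r ℓ) σ ∧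
    ∀ i < ℓ, (s i, WDir.L) ∈ δ (r i) σ ∧ (s i, r (i + 1)) ∈ tauT δ z

lemma TabP_base (z : List Γ) (σ : Γ) {q p : Q} (h : (q, WDir.R) ∈ δ p σ) :
    TabP δ z σ q p :=
  ⟨0, fun _ => p, fun _ => p, rfl, h, fun i hi => absurd hi (Nat.not_lt_zero i)⟩

lemma TabP_cons (z : List Γ) (σ : Γ) {q p s0 r' : Q}
    (h1 : (s0, WDir.L) ∈ δ p σ) (h2 : (s0, r') ∈ tauT δ z)
    (h3 : TabP δ z σ q r') : TabP δ z σ q p := by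
  obtain ⟨ℓ, r, s, hr0, hend, hmid⟩ := h3
  refine ⟨ℓ + 1, fun i => match i with | 0 => p | i + 1 => r i,
    fun i => match i with | 0 => s0 | i + 1 => s i, rfl, hend, ?_⟩
  rintro (_ | i) hi
  · exact ⟨h1, by show (s0, r 0) ∈ tauT δ z; rw [hr0]; exact h2⟩
  · exact hmid i (Nat.lt_of_succ_lt_succ hi)

lemma TabP_sound (z : List Γ) (σ : Γ) (hz : z ≠ []) (q : Q) :
    ∀ (ℓ : ℕ) (r s : ℕ → Q), (q, WDir.R) ∈ δ (r ℓ) σ →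
      (∀ i < ℓ, (s i, WDir.L) ∈ δ (r i) σ ∧ (s i, r (i + 1)) ∈ tauT δ z) →
      segReach δ (z ++ [σ]) (r 0, z.length) (q, z.length + 1) := by
  intro ℓ
  induction ℓ with
  | zero =>
    intro r s hend _
    exact Relation.ReflTransGen.single
      ⟨σ, List.getElem?_concat_length, Or.inr ⟨hend, rfl⟩⟩
  | succ ℓ ih =>
    intro r s hend hmid
    have hz1 : 1 ≤ z.length := List.length_pos_iff.mpr hz
    obtain ⟨hL, hT⟩ := hmid 0 (Nat.succ_pos ℓ)
    have step1 : segStep δ (z ++ [σ]) (r 0, z.length) (s 0, z.length - 1) :=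
      ⟨σ, List.getElem?_concat_length,
        Or.inl ⟨hL, Nat.succ_pred_eq_of_pos hz1⟩⟩
    have reach2 : segReach δ (z ++ [σ]) (s 0, z.length - 1) (r 1, z.length) :=
      segReach_lift δ z σ hT
    have reach3 : segReach δ (z ++ [σ]) (r 1, z.length) (q, z.length + 1) :=
      ih (fun i => r (i + 1)) (fun i => s (i + 1)) hend
        (fun i hi => hmid (i + 1) (Nat.succ_lt_succ hi))
    exact (Relation.ReflTransGen.head step1 reach2).trans reach3

lemma TabP_complete (z : List Γ) (σ : Γ) (hz : z ≠ []) (p q : Q)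
    (h : segReach δ (z ++ [σ]) (p, z.length) (q, z.length + 1)) :
    TabP δ z σ q p := by
  set n := z.length with hn
  have hz1 : 1 ≤ n := List.length_pos_iff.mpr hz
  -- generalized motive
  suffices H : ∀ c : Q × ℕ, segReach δ (z ++ [σ]) c (q, n + 1) →
      (c.2 = n + 1 → c.1 = q) ∧
      (c.2 = n → TabP δ z σ q c.1) ∧
      (c.2 < n → ∃ r', segReach δ z c (r', n) ∧ TabP δ z σ q r') by
    exact ((H (p, n) h).2.1) rfl
  intro c hc
  induction hc using Relation.ReflTransGen.head_induction_on with
  | refl =>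
    refine ⟨fun _ => rfl, fun h' => absurd h' (by omega), fun h' => absurd h' (by omega)⟩
  | head hstep _ ih =>
    rename_i c c' _
    obtain ⟨a, ha, hor⟩ := hstep
    have hc2 : c.2 < n + 1 := by
      by_contra h'
      rw [List.getElem?_eq_none (by simpa using not_lt.mp h')] at ha
      cases ha
    refine ⟨fun h' => absurd h' (by omega), ?_, ?_⟩
    · -- c.2 = n
      intro h2
      have haσ : a = σ := by
        rw [h2, hn, List.getElem?_concat_length] at ha
        exact (Option.some.injEq _ _ ▸ ha).symm
      rcases hor with ⟨hL, hpos⟩ | ⟨hR, hpos⟩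
      · -- went left to position n - 1
        rw [haσ] at hL
        have hc'2 : c'.2 = n - 1 := by omega
        have hc'lt : c'.2 < n := by omega
        obtain ⟨r', hreach, htab⟩ := ih.2.2 hc'lt
        refine TabP_cons δ z σ hL ?_ htab
        show segReach δ z (c'.1, n - 1) (r', n)
        rw [← hc'2]; exact hreach
      · -- went right, exiting: c'.2 = n + 1
        rw [haσ] at hR
        have : c'.1 = q := ih.1 (by omega)
        exact TabP_base δ z σ (this ▸ hR)
    · -- c.2 < n
      intro h2
      have haz : z[c.2]? = some a := by
        rw [List.getElem?_append_left h2] at ha; exact ha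
      rcases hor with ⟨hL, hpos⟩ | ⟨hR, hpos⟩
      · have hc'lt : c'.2 < n := by omega
        obtain ⟨r', hreach, htab⟩ := ih.2.2 hc'lt
        exact ⟨r', Relation.ReflTransGen.head ⟨a, haz, Or.inl ⟨hL, hpos⟩⟩ hreach, htab⟩
      · rcases Nat.lt_or_ge c'.2 n with hc'lt | hc'ge
        · obtain ⟨r', hreach, htab⟩ := ih.2.2 hc'lt
          exact ⟨r', Relation.ReflTransGen.head ⟨a, haz, Or.inr ⟨hR, hpos⟩⟩ hreach, htab⟩
        · have hc'eq : c'.2 = n := by omega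
          refine ⟨c'.1, Relation.ReflTransGen.single ⟨a, haz, Or.inr ⟨hR, ?_⟩⟩,
            ih.2.1 hc'eq⟩
          omega

end TauAux

/-- Recurrence for `τ_{zσ}`: `(p,q) ∈ τ_{zσ}` iff there is a sequence of states
`r 0 = p, s 0, r 1, s 1, …, r ℓ` (ℓ ≥ 0) with `(q, R) ∈ δ(r ℓ, σ)` and, for each
`i < ℓ`, `(s i, L) ∈ δ(r i, σ)` and `(s i, r (i+1)) ∈ τ_z`. -/
theorem tau_update {Q Γ : Type*} (δ : Q → Γ → Set (Q × WDir))
    (z : List Γ) (σ : Γ) (hz : z ≠ []) (p q : Q) :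
    (p, q) ∈ tauT δ (z ++ [σ]) ↔
      ∃ (ℓ : ℕ) (r s : ℕ → Q),
        r 0 = p ∧ (q, WDir.R) ∈ δ (r ℓ) σ ∧
        ∀ i < ℓ, (s i, WDir.L) ∈ δ (r i) σ ∧ (s i, r (i + 1)) ∈ tauT δ z := by
  have hz1 : 1 ≤ z.length := List.length_pos_iff.mpr hz
  have hlen : (z ++ [σ]).length = z.length + 1 := by simp
  constructor
  · intro h
    have h' : segReach δ (z ++ [σ]) (p, z.length) (q, z.length + 1) := by
      have := h
      simp only [tauT, Set.mem_setOf_eq, hlen, Nat.add_sub_cancel] at this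
      exact this
    exact TabP_complete δ z σ hz p q h'
  · rintro ⟨ℓ, r, s, hr0, hend, hmid⟩
    have := TabP_sound δ z σ hz q ℓ r s hend hmid
    rw [hr0] at this
    simp only [tauT, Set.mem_setOf_eq, hlen, Nat.add_sub_cancel]
    exact this
end

section
/- Let A be a 2NFA, z a prefix of the padded input, and σ a symbol. Then q ∈ γ_{zσ} if and only if there exists p ∈ γ_z with (p, q) ∈ τ_{zσ}. -/
private lemma segStep_mono {Q Γ : Type*} (δ : Q → Γ → Set (Q × WDir))
    (z : List Γ) (σ : Γ) {c c' : Q × ℕ} (h : segStep δ z c c') :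
    segStep δ (z ++ [σ]) c c' := by
  obtain ⟨a, ha, h'⟩ := h
  have hlt : c.2 < z.length := by
    by_contra hge
    simp [List.getElem?_eq_none (not_lt.mp hge)] at ha
  exact ⟨a, by rw [List.getElem?_append, if_pos hlt]; exact ha, h'⟩

private lemma crossing {Q Γ : Type*} (δ : Q → Γ → Set (Q × WDir))
    (z : List Γ) (σ : Γ) (q : Q) :
    ∀ c : Q × ℕ, segReach δ (z ++ [σ]) c (q, z.length + 1) →
      c.2 ≤ z.length →
      ∃ p, segReach δ z c (p, z.length) ∧
        segReach δ (z ++ [σ]) (p, z.length) (q, z.length + 1) := by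
  intro c h
  induction h using Relation.ReflTransGen.head_induction_on with
  | refl => intro hle; simp at hle
  | head step rest ih =>
    rename_i a b
    intro hle
    obtain ⟨s, i⟩ := a
    by_cases hn : i = z.length
    · subst hn
      exact ⟨s, Relation.ReflTransGen.refl, Relation.ReflTransGen.head step rest⟩
    · have hlt : i < z.length := lt_of_le_of_ne hle hn
      obtain ⟨x, hx, hd⟩ := step
      have hx' : z[i]? = some x := by
        rwa [List.getElem?_append, if_pos hlt] at hx
      have hb : b.2 ≤ z.length := by rcases hd with ⟨_, h2⟩ | ⟨_, h2⟩ <;> omega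
      obtain ⟨p, hp1, hp2⟩ := ih hb
      exact ⟨p, Relation.ReflTransGen.head ⟨x, hx', hd⟩ hp1, hp2⟩

/-- `q ∈ γ_{zσ}` iff `(p, q) ∈ τ_{zσ}` for some `p ∈ γ_z`. -/
theorem gamma_update {Q Γ : Type*} (δ : Q → Γ → Set (Q × WDir)) (q₀ : Q)
    (z : List Γ) (σ : Γ) (hz : z ≠ []) (q : Q) :
    q ∈ gammaT δ q₀ (z ++ [σ]) ↔
      ∃ p ∈ gammaT δ q₀ z, (p, q) ∈ tauT δ (z ++ [σ]) := by
  have hlen : (z ++ [σ]).length = z.length + 1 := by simp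
  constructor
  · intro h
    have h' : segReach δ (z ++ [σ]) (q₀, 0) (q, z.length + 1) := by
      rwa [gammaT, Set.mem_setOf_eq, hlen] at h
    obtain ⟨p, hp1, hp2⟩ := crossing δ z σ q (q₀, 0) h' (Nat.zero_le _)
    refine ⟨p, hp1, ?_⟩
    simp only [tauT, Set.mem_setOf_eq, hlen]
    simpa using hp2
  · rintro ⟨p, hp, hpq⟩
    have h1 : segReach δ (z ++ [σ]) (q₀, 0) (p, z.length) :=
      Relation.ReflTransGen.mono (fun _ _ => segStep_mono δ z σ) _ _ hp
    have h2 : segReach δ (z ++ [σ]) (p, z.length) (q, z.length + 1) := by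
      have := hpq
      simp only [tauT, Set.mem_setOf_eq, hlen] at this
      simpa using this
    show segReach δ (z ++ [σ]) (q₀, 0) (q, (z ++ [σ]).length)
    rw [hlen]
    exact h1.trans h2
end
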